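/- Let η be a real number with 0 < η < π/6 and let ξ ∈ (0, π − 6η). Set ϖ0 = 1 + 2cos(4η) and τ = sin(6η)·sin(ξ+2η) / (sin(2η)·sin(ξ+6η)). Then τ ≠ 1, τ + ϖ0 ≠ 0, and τ·(1 + ϖ0) / ((τ − 1)·(τ + ϖ0)) = sin(ξ+6η)·sin(ξ+2η) / (sin(ξ)·sin(ξ+4η)). -/

import Mathlib

/-- Closed parametric form of the slope function s(τ) for the 'normal' portion at μ=0, λ=5η. -/
theorem stmt8 (η ξ : ℝ) (h1 : 0 < η) (h2 : η < Real.pi/6)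
    (hξ : ξ ∈ Set.Ioo 0 (Real.pi - 6*η))
    (ϖ τ : ℝ) (hϖ : ϖ = 1 + 2*Real.cos (4*η))
    (hτ : τ = Real.sin (6*η) * Real.sin (ξ + 2*η) / (Real.sin (2*η) * Real.sin (ξ + 6*η))) :
    τ ≠ 1 ∧ τ + ϖ ≠ 0 ∧
    τ * (1 + ϖ) / ((τ - 1) * (τ + ϖ))
      = Real.sin (ξ + 6*η) * Real.sin (ξ + 2*η) / (Real.sin ξ * Real.sin (ξ + 4*η)) := by
  obtain ⟨hξ0, hξπ⟩ := hξ
  have hπ := Real.pi_pos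
  -- positivity of all the sines/cosines
  have hs2 : 0 < Real.sin (2*η) := Real.sin_pos_of_pos_of_lt_pi (by linarith) (by linarith)
  have hs4 : 0 < Real.sin (4*η) := Real.sin_pos_of_pos_of_lt_pi (by linarith) (by linarith)
  have hs6 : 0 < Real.sin (6*η) := Real.sin_pos_of_pos_of_lt_pi (by linarith) (by linarith)
  have hc2 : 0 < Real.cos (2*η) := Real.cos_pos_of_mem_Ioo ⟨by linarith, by linarith⟩
  have hsξ : 0 < Real.sin ξ := Real.sin_pos_of_pos_of_lt_pi hξ0 (by linarith)
  have hsξ2 : 0 < Real.sin (ξ + 2*η) := Real.sin_pos_of_pos_of_lt_pi (by linarith) (by linarith)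
  have hsξ4 : 0 < Real.sin (ξ + 4*η) := Real.sin_pos_of_pos_of_lt_pi (by linarith) (by linarith)
  have hsξ6 : 0 < Real.sin (ξ + 6*η) := Real.sin_pos_of_pos_of_lt_pi (by linarith) (by linarith)
  -- trig identities
  have hD : Real.sin (4*η) = 2 * Real.sin (2*η) * Real.cos (2*η) := by
    have : (4:ℝ)*η = 2*η + 2*η := by ring
    rw [this, Real.sin_add]; ring
  have hcos4 : Real.cos (4*η) = 2 * Real.cos (2*η)^2 - 1 := by
    have : (4:ℝ)*η = 2*(2*η) := by ring
    rw [this, Real.cos_two_mul]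
  have hC : Real.sin (6*η) = Real.sin (2*η) * (1 + 2*Real.cos (4*η)) := by
    have : (6:ℝ)*η = 4*η + 2*η := by ring
    rw [this, Real.sin_add, hD, hcos4]; ring
  have hA : Real.sin (6*η) * Real.sin (ξ + 2*η) - Real.sin (2*η) * Real.sin (ξ + 6*η)
      = Real.sin (4*η) * Real.sin ξ := by
    have e1 : ξ + 2*η = ξ + 2*η := rfl
    have h6 : Real.sin (6*η) = Real.sin (4*η + 2*η) := by ring_nf
    have hξ6 : Real.sin (ξ + 6*η) = Real.sin ((ξ + 2*η) + 4*η) := by ring_nf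
    simp only [h6, hξ6, Real.sin_add, Real.cos_add]
    linear_combination Real.sin (4*η) * Real.sin ξ * (Real.sin_sq_add_cos_sq (2*η))
  have hB : Real.sin (ξ + 2*η) + Real.sin (ξ + 6*η)
      = 2 * Real.sin (ξ + 4*η) * Real.cos (2*η) := by
    have h2' : Real.sin (ξ + 2*η) = Real.sin ((ξ + 4*η) - 2*η) := by ring_nf
    have h6' : Real.sin (ξ + 6*η) = Real.sin ((ξ + 4*η) + 2*η) := by ring_nf
    simp only [h2', h6', Real.sin_sub, Real.sin_add, Real.cos_add, Real.cos_sub]; ring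
  have hden : Real.sin (2*η) * Real.sin (ξ + 6*η) ≠ 0 := by positivity
  have hτ1 : τ - 1 = Real.sin (4*η) * Real.sin ξ / (Real.sin (2*η) * Real.sin (ξ + 6*η)) := by
    rw [hτ, eq_div_iff hden, sub_mul, div_mul_cancel₀ _ hden]; linarith [hA]
  have hτϖ : τ + ϖ = 2 * Real.sin (6*η) * Real.sin (ξ + 4*η) * Real.cos (2*η)
      / (Real.sin (2*η) * Real.sin (ξ + 6*η)) := by
    rw [hτ, hϖ]; rw [div_add' _ _ _ hden, div_eq_div_iff hden hden]
    calc (Real.sin (6*η) * Real.sin (ξ + 2*η) + (1 + 2*Real.cos (4*η)) * (Real.sin (2*η) * Real.sin (ξ + 6*η)))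
          * (Real.sin (2*η) * Real.sin (ξ + 6*η))
        = (Real.sin (6*η) * (Real.sin (ξ + 2*η) + Real.sin (ξ + 6*η)))
          * (Real.sin (2*η) * Real.sin (ξ + 6*η)) := by rw [hC]; ring
      _ = _ := by rw [hB]; ring
  have hτ1pos : 0 < τ - 1 := by rw [hτ1]; positivity
  have hτϖpos : 0 < τ + ϖ := by rw [hτϖ]; positivity
  refine ⟨by intro h; rw [h] at hτ1pos; simp at hτ1pos, ne_of_gt hτϖpos, ?_⟩
  rw [hτ1, hτϖ, hτ, hϖ]
  have h1ϖ : (1:ℝ) + (1 + 2*Real.cos (4*η)) = 4 * Real.cos (2*η)^2 := by rw [hcos4]; ring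
  rw [h1ϖ]
  field_simp
  rw [show η*2 = 2*η by ring, show η*4 = 4*η by ring, hD]
  rw [div_eq_div_iff (by positivity) (by positivity)]
  ring
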